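/- arXiv:2401.00821 — 2 statements merged into one kernel-verified Lean document; each statement's English description precedes it below -/
import Mathlib

section
/- Let A be a nonreductive line arrangement of 12 pairwise distinct lines in ℂP² with at least one point of multiplicity 6 and with n_r(A) = 0 for all r ≥ 7. Then n_5(A) = 0, i.e., A has no point of multiplicity 5. -/
open Submodule Module

/-- The underlying vector space `ℂ³` for the linear model of `ℂP²`. -/
abbrev Vc : Type := Fin 3 → ℂ

/-- A projective point of `ℂP²`: a 1-dimensional `ℂ`-subspace of `ℂ³`. -/
def IsProjPoint (p : Submodule ℂ Vc) : Prop := Module.finrank ℂ p = 1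

/-- A projective line of `ℂP²`: a 2-dimensional `ℂ`-subspace of `ℂ³`. -/
def IsProjLine (L : Submodule ℂ Vc) : Prop := Module.finrank ℂ L = 2

/-- A line arrangement: a finite set of (pairwise distinct) projective lines. -/
def LineArrangement (A : Finset (Submodule ℂ Vc)) : Prop := ∀ L ∈ A, IsProjLine L

/-- The multiplicity of a projective point `p` with respect to `A`:
the number of lines of `A` containing `p`. -/
noncomputable def mult (A : Finset (Submodule ℂ Vc)) (p : Submodule ℂ Vc) : ℕ :=
  Set.ncard {L : Submodule ℂ Vc | L ∈ A ∧ p ≤ L}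

/-- `nPts A r` is the number of projective points of multiplicity exactly `r` w.r.t. `A`. -/
noncomputable def nPts (A : Finset (Submodule ℂ Vc)) (r : ℕ) : ℕ :=
  Set.ncard {p : Submodule ℂ Vc | IsProjPoint p ∧ mult A p = r}

/-- A multiple point of `A`: a projective point of multiplicity at least 3. -/
def IsMultPoint (A : Finset (Submodule ℂ Vc)) (p : Submodule ℂ Vc) : Prop :=
  IsProjPoint p ∧ 3 ≤ mult A p

/-- `A` is nonreductive if every line of `A` contains at least 3 multiple points of `A`. -/
def Nonreductive (A : Finset (Submodule ℂ Vc)) : Prop :=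
  ∀ L ∈ A, 3 ≤ Set.ncard {p : Submodule ℂ Vc | IsMultPoint A p ∧ p ≤ L}

/-- The projective line `{aX + bY + cZ = 0}`. -/
noncomputable def lineEq (a b c : ℂ) : Submodule ℂ Vc :=
  LinearMap.ker (a • (LinearMap.proj 0 : Vc →ₗ[ℂ] ℂ) + b • (LinearMap.proj 1 : Vc →ₗ[ℂ] ℂ)
    + c • (LinearMap.proj 2 : Vc →ₗ[ℂ] ℂ))

/-- Lattice isomorphism of two arrangements of `n` lines. -/
def LatticeIso (n : ℕ) (A B : Finset (Submodule ℂ Vc)) : Prop :=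
  ∃ L H : Fin n → Submodule ℂ Vc,
    Function.Injective L ∧ Function.Injective H ∧
    (∀ M, M ∈ A ↔ ∃ i, L i = M) ∧ (∀ M, M ∈ B ↔ ∃ i, H i = M) ∧
    ∀ S : Finset (Fin n), S.Nonempty →
      Module.finrank ℂ ↥(⨅ i ∈ S, L i) = Module.finrank ℂ ↥(⨅ i ∈ S, H i)

/-- Projective equivalence of two arrangements. -/
def ProjEquiv (A B : Finset (Submodule ℂ Vc)) : Prop :=
  ∃ g : Vc ≃ₗ[ℂ] Vc,
    (fun M => Submodule.map (g : Vc →ₗ[ℂ] Vc) M) '' (A : Set (Submodule ℂ Vc))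
      = (B : Set (Submodule ℂ Vc))

open scoped Classical

lemma finrank_Vc : Module.finrank ℂ Vc = 3 := by simp [Vc]

lemma point_eq_point {L L' p q : Submodule ℂ Vc}
    (hL : IsProjLine L) (hL' : IsProjLine L') (hne : L ≠ L')
    (hp : IsProjPoint p) (hq : IsProjPoint q)
    (hpL : p ≤ L) (hpL' : p ≤ L') (hqL : q ≤ L) (hqL' : q ≤ L') : p = q := by
  have hL2 : Module.finrank ℂ L = 2 := hL
  have hL'2 : Module.finrank ℂ L' = 2 := hL'
  have hp1 : Module.finrank ℂ p = 1 := hp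
  have hq1 : Module.finrank ℂ q = 1 := hq
  have hsup : L < L ⊔ L' := by
    refine lt_of_le_of_ne le_sup_left fun h => hne ?_
    have hle : L' ≤ L := by rw [h]; exact le_sup_right
    exact (Submodule.eq_of_le_of_finrank_le hle (by rw [hL2, hL'2])).symm
  have h3 : Module.finrank ℂ ↥(L ⊔ L') = 3 := by
    have h1 : 2 < Module.finrank ℂ ↥(L ⊔ L') := by
      rw [← hL2]; exact Submodule.finrank_lt_finrank_of_lt hsup
    have h2 : Module.finrank ℂ ↥(L ⊔ L') ≤ 3 := by
      have := Submodule.finrank_le (L ⊔ L')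
      rwa [finrank_Vc] at this
    omega
  have h4 := Submodule.finrank_sup_add_finrank_inf_eq L L'
  rw [h3, hL2, hL'2] at h4
  have hinf : Module.finrank ℂ ↥(L ⊓ L') = 1 := by omega
  have hpe : p = L ⊓ L' :=
    Submodule.eq_of_le_of_finrank_le (le_inf hpL hpL') (by rw [hinf, hp1])
  have hqe : q = L ⊓ L' :=
    Submodule.eq_of_le_of_finrank_le (le_inf hqL hqL') (by rw [hinf, hq1])
  rw [hpe, hqe]

lemma line_eq_line {L L' p q : Submodule ℂ Vc}
    (hL : IsProjLine L) (hL' : IsProjLine L')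
    (hp : IsProjPoint p) (hq : IsProjPoint q) (hpq : p ≠ q)
    (hpL : p ≤ L) (hqL : q ≤ L) (hpL' : p ≤ L') (hqL' : q ≤ L') : L = L' := by
  by_contra h
  exact hpq (point_eq_point hL hL' h hp hq hpL hpL' hqL hqL')

/-- The lines of `A` through `m`, as a `Finset`. -/
noncomputable def thru (A : Finset (Submodule ℂ Vc)) (m : Submodule ℂ Vc) :
    Finset (Submodule ℂ Vc) := A.filter (fun L => m ≤ L)

lemma mem_thru {A : Finset (Submodule ℂ Vc)} {m L : Submodule ℂ Vc} :
    L ∈ thru A m ↔ L ∈ A ∧ m ≤ L := by simp [thru]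

lemma mult_eq_thru (A : Finset (Submodule ℂ Vc)) (m : Submodule ℂ Vc) :
    mult A m = (thru A m).card := by
  rw [mult, ← Set.ncard_coe_finset]
  congr 1
  ext L
  simp [thru]

lemma exists_three {α : Type*} {s : Set α} (h : 3 ≤ s.ncard) :
    ∃ a ∈ s, ∃ b ∈ s, ∃ c ∈ s, a ≠ b ∧ a ≠ c ∧ b ≠ c := by
  obtain ⟨t, hts, ht⟩ := Set.exists_subset_card_eq h
  rw [Set.ncard_eq_three] at ht
  obtain ⟨a, b, c, hab, hac, hbc, rfl⟩ := ht
  exact ⟨a, hts (by simp), b, hts (by simp), c, hts (by simp), hab, hac, hbc⟩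

lemma exists_two_ne {α : Type*} {s : Set α} (h : 3 ≤ s.ncard) (x : α) :
    ∃ u ∈ s, ∃ v ∈ s, u ≠ v ∧ u ≠ x ∧ v ≠ x := by
  obtain ⟨a, ha, b, hb, c, hc, hab, hac, hbc⟩ := exists_three h
  by_cases hax : a = x
  · subst hax; exact ⟨b, hb, c, hc, hbc, hab.symm, hac.symm⟩
  by_cases hbx : b = x
  · subst hbx; exact ⟨a, ha, c, hc, hac, hax, hbc.symm⟩
  exact ⟨a, ha, b, hb, hab, hax, hbx⟩

lemma exists_one_ne {α : Type*} {s : Set α} (h : 3 ≤ s.ncard) (x y : α) :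
    ∃ u ∈ s, u ≠ x ∧ u ≠ y := by
  obtain ⟨u, hu, v, hv, huv, hux, hvx⟩ := exists_two_ne h x
  by_cases huy : u = y
  · exact ⟨v, hv, hvx, fun h => huv (h.trans huy.symm).symm⟩
  · exact ⟨u, hu, hux, huy⟩

/-- A nonreductive arrangement of 12 lines with a sextic point and no point of multiplicity
at least 7 has no quintuple point. -/
theorem nonreductive_sextic_no_quintuple (A : Finset (Submodule ℂ Vc))
    (hA : LineArrangement A) (hcard : A.card = 12) (hnr : Nonreductive A)
    (h6 : 1 ≤ nPts A 6) (h7 : ∀ r, 7 ≤ r → nPts A r = 0) :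
    nPts A 5 = 0 := by
  by_contra h5
  -- get the quintuple point q and the sextic point p
  have hq' : {m : Submodule ℂ Vc | IsProjPoint m ∧ mult A m = 5}.Nonempty := by
    rw [Set.nonempty_iff_ne_empty]
    intro h
    exact h5 (by rw [nPts, h, Set.ncard_empty])
  obtain ⟨q, hq, hq5⟩ := hq'
  have hp' : {m : Submodule ℂ Vc | IsProjPoint m ∧ mult A m = 6}.Nonempty := by
    by_contra h
    rw [Set.not_nonempty_iff_eq_empty] at h
    rw [nPts, h, Set.ncard_empty] at h6
    omega
  obtain ⟨p, hp, hp6⟩ := hp'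
  have hpq : p ≠ q := by
    rintro rfl
    rw [hq5] at hp6
    omega
  -- the pencils through p and q
  have hS6 : (thru A p).card = 6 := (mult_eq_thru A p).symm.trans hp6
  have hT5 : (thru A q).card = 5 := (mult_eq_thru A q).symm.trans hq5
  have hSsub : thru A p ⊆ A := Finset.filter_subset _ _
  have hTsub : thru A q ⊆ A := Finset.filter_subset _ _
  have hUsub : thru A p ∪ thru A q ⊆ A := Finset.union_subset hSsub hTsub
  -- any two distinct points lie on at most one common line of A
  have hsing : ∀ m x : Submodule ℂ Vc, IsProjPoint m → IsProjPoint x → m ≠ x →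
      (thru A m ∩ thru A x).card ≤ 1 := by
    intro m x hm hx hmx
    refine Finset.card_le_one.mpr ?_
    intro L hL L' hL'
    simp only [Finset.mem_inter, mem_thru] at hL hL'
    exact line_eq_line (hA _ hL.1.1) (hA _ hL'.1.1) hm hx hmx hL.1.2 hL.2.2 hL'.1.2 hL'.2.2
  -- covering count
  have hcover : ∀ m : Submodule ℂ Vc, (thru A m).card ≤
      (thru A m ∩ thru A p).card + (thru A m ∩ thru A q).card
        + (thru A m ∩ (A \ (thru A p ∪ thru A q))).card := by
    intro m
    have hsub : thru A m ⊆ ((thru A m ∩ thru A p) ∪ (thru A m ∩ thru A q))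
        ∪ (thru A m ∩ (A \ (thru A p ∪ thru A q))) := by
      intro L hL
      have hLA : L ∈ A := (mem_thru.mp hL).1
      simp only [Finset.mem_union, Finset.mem_inter, Finset.mem_sdiff, mem_thru] at *
      tauto
    calc (thru A m).card ≤ _ := Finset.card_le_card hsub
      _ ≤ ((thru A m ∩ thru A p) ∪ (thru A m ∩ thru A q)).card
          + (thru A m ∩ (A \ (thru A p ∪ thru A q))).card := Finset.card_union_le _ _
      _ ≤ _ := Nat.add_le_add_right (Finset.card_union_le _ _) _
  have hSTle : (thru A p ∩ thru A q).card ≤ 1 := hsing p q hp hq hpq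
  have hSTcases : (thru A p ∩ thru A q).card = 0 ∨ (thru A p ∩ thru A q).card = 1 := by
    omega
  rcases hSTcases with hST | hST
  · -- Case A : the pencils are disjoint
    have hdisj : Disjoint (thru A p) (thru A q) := by
      rw [Finset.disjoint_iff_inter_eq_empty]
      exact Finset.card_eq_zero.mp hST
    have hUcard : (thru A p ∪ thru A q).card = 11 := by
      rw [Finset.card_union_of_disjoint hdisj, hS6, hT5]
    have hRcard : (A \ (thru A p ∪ thru A q)).card = 1 := by
      rw [Finset.card_sdiff_of_subset hUsub, hcard, hUcard]
    obtain ⟨L, hLS⟩ : (thru A p).Nonempty := by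
      rw [← Finset.card_pos, hS6]; omega
    have hLA : L ∈ A := hSsub hLS
    have hpL : p ≤ L := (mem_thru.mp hLS).2
    have hqL : ¬ q ≤ L := fun h =>
      Finset.disjoint_left.mp hdisj hLS (mem_thru.mpr ⟨hLA, h⟩)
    obtain ⟨m, hm, m', hm', hmm', hmp, hm'p⟩ := exists_two_ne (hnr L hLA) p
    -- each of m, m' lies on a line of the residual set
    have hres : ∀ u : Submodule ℂ Vc, (IsMultPoint A u ∧ u ≤ L) → u ≠ p →
        ∃ M, M ∈ A \ (thru A p ∪ thru A q) ∧ u ≤ M := by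
      intro u hu hup
      have huq : u ≠ q := fun h => hqL (h ▸ hu.2)
      have h3 : 3 ≤ (thru A u).card := (mult_eq_thru A u) ▸ hu.1.2
      have c1 := hsing u p hu.1.1 hp hup
      have c2 := hsing u q hu.1.1 hq huq
      have hc := hcover u
      have hpos : 0 < (thru A u ∩ (A \ (thru A p ∪ thru A q))).card := by omega
      obtain ⟨M, hM⟩ := Finset.card_pos.mp hpos
      rw [Finset.mem_inter, mem_thru] at hM
      exact ⟨M, hM.2, hM.1.2⟩
    obtain ⟨M, hMR, hmM⟩ := hres m hm hmp
    obtain ⟨M', hM'R, hm'M⟩ := hres m' hm' hm'p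
    have hMM' : M = M' := Finset.card_le_one.mp (le_of_eq hRcard) M hMR M' hM'R
    subst hMM'
    have hMA : M ∈ A := (Finset.mem_sdiff.mp hMR).1
    have hLM : L ≠ M := by
      rintro rfl
      exact (Finset.mem_sdiff.mp hMR).2 (Finset.mem_union_left _ hLS)
    exact hmm' (point_eq_point (hA L hLA) (hA M hMA) hLM hm.1.1 hm'.1.1
      hm.2 hmM hm'.2 hm'M)
  · -- Case B : the pencils share a line e
    obtain ⟨e, he⟩ := Finset.card_eq_one.mp hST
    have heST : e ∈ thru A p ∩ thru A q := by rw [he]; exact Finset.mem_singleton_self e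
    have heS : e ∈ thru A p := (Finset.mem_inter.mp heST).1
    have heT : e ∈ thru A q := (Finset.mem_inter.mp heST).2
    have heA : e ∈ A := hSsub heS
    have hpe : p ≤ e := (mem_thru.mp heS).2
    have hqe : q ≤ e := (mem_thru.mp heT).2
    have hUcard : (thru A p ∪ thru A q).card = 10 := by
      have hu := Finset.card_union_add_card_inter (thru A p) (thru A q)
      rw [hS6, hT5, hST] at hu
      omega
    have hRcard : (A \ (thru A p ∪ thru A q)).card = 2 := by
      rw [Finset.card_sdiff_of_subset hUsub, hcard, hUcard]
    obtain ⟨M, N, hMN, hRMN⟩ := Finset.card_eq_two.mp hRcard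
    have hMR : M ∈ A \ (thru A p ∪ thru A q) := by rw [hRMN]; simp
    have hNR : N ∈ A \ (thru A p ∪ thru A q) := by rw [hRMN]; simp
    have hMA : M ∈ A := (Finset.mem_sdiff.mp hMR).1
    have hNA : N ∈ A := (Finset.mem_sdiff.mp hNR).1
    -- Step (i): a multiple point x on e other than p, q ; it lies on both M and N
    obtain ⟨x, hx, hxp, hxq⟩ := exists_one_ne (hnr e heA) p q
    have hxMN : x ≤ M ∧ x ≤ N := by
      have h3 : 3 ≤ (thru A x).card := (mult_eq_thru A x) ▸ hx.1.2
      have hxsub : thru A x ⊆ {e} ∪ (thru A x ∩ (A \ (thru A p ∪ thru A q))) := by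
        intro L' hL'
        rw [mem_thru] at hL'
        by_cases hL'U : L' ∈ thru A p ∪ thru A q
        · rcases Finset.mem_union.mp hL'U with hS' | hT'
          · have he' : L' = e := line_eq_line (hA _ hL'.1) (hA _ heA) hx.1.1 hp hxp
              hL'.2 (mem_thru.mp hS').2 hx.2 hpe
            exact Finset.mem_union_left _ (by simp [he'])
          · have he' : L' = e := line_eq_line (hA _ hL'.1) (hA _ heA) hx.1.1 hq hxq
              hL'.2 (mem_thru.mp hT').2 hx.2 hqe
            exact Finset.mem_union_left _ (by simp [he'])
        · exact Finset.mem_union_right _ (Finset.mem_inter.mpr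
            ⟨mem_thru.mpr hL', Finset.mem_sdiff.mpr ⟨hL'.1, hL'U⟩⟩)
      have hle : (thru A x).card ≤ 1 + (thru A x ∩ (A \ (thru A p ∪ thru A q))).card :=
        le_trans (Finset.card_le_card hxsub)
          (le_trans (Finset.card_union_le _ _) (by simp))
      have hRle : (thru A x ∩ (A \ (thru A p ∪ thru A q))).card
          ≤ (A \ (thru A p ∪ thru A q)).card :=
        Finset.card_le_card Finset.inter_subset_right
      have heq : thru A x ∩ (A \ (thru A p ∪ thru A q)) = A \ (thru A p ∪ thru A q) :=
        Finset.eq_of_subset_of_card_le Finset.inter_subset_right (by omega)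
      constructor
      · have hMm : M ∈ thru A x ∩ (A \ (thru A p ∪ thru A q)) := by rw [heq]; exact hMR
        exact (mem_thru.mp (Finset.mem_inter.mp hMm).1).2
      · have hNm : N ∈ thru A x ∩ (A \ (thru A p ∪ thru A q)) := by rw [heq]; exact hNR
        exact (mem_thru.mp (Finset.mem_inter.mp hNm).1).2
    -- Step (ii): each line of the p-pencil other than e carries a multiple point on N
    -- which also lies on a line of the q-pencil other than e
    have hkey : ∀ L ∈ (thru A p).erase e, ∃ t ∈ (thru A q).erase e,
        ∃ m : Submodule ℂ Vc, IsProjPoint m ∧ m ≠ p ∧ m ≤ L ∧ m ≤ N ∧ m ≤ t := by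
      intro L hLe
      have hLS : L ∈ thru A p := Finset.mem_of_mem_erase hLe
      have hLne : L ≠ e := Finset.ne_of_mem_erase hLe
      have hLA : L ∈ A := hSsub hLS
      have hpL : p ≤ L := (mem_thru.mp hLS).2
      have hqL : ¬ q ≤ L := by
        intro h
        have hLT : L ∈ thru A p ∩ thru A q :=
          Finset.mem_inter.mpr ⟨hLS, mem_thru.mpr ⟨hLA, h⟩⟩
        rw [he, Finset.mem_singleton] at hLT
        exact hLne hLT
      obtain ⟨m₁, hm₁, m₂, hm₂, hm₁₂, hm₁p, hm₂p⟩ := exists_two_ne (hnr L hLA) p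
      -- every multiple point on L other than p lies on a residual line
      have hres : ∀ u : Submodule ℂ Vc, (IsMultPoint A u ∧ u ≤ L) → u ≠ p →
          ∃ W, W ∈ A \ (thru A p ∪ thru A q) ∧ u ≤ W := by
        intro u hu hup
        have huq : u ≠ q := fun h => hqL (h ▸ hu.2)
        have h3 : 3 ≤ (thru A u).card := (mult_eq_thru A u) ▸ hu.1.2
        have c1 := hsing u p hu.1.1 hp hup
        have c2 := hsing u q hu.1.1 hq huq
        have hc := hcover u
        have hpos : 0 < (thru A u ∩ (A \ (thru A p ∪ thru A q))).card := by omega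
        obtain ⟨W, hW⟩ := Finset.card_pos.mp hpos
        rw [Finset.mem_inter, mem_thru] at hW
        exact ⟨W, hW.2, hW.1.2⟩
      obtain ⟨W₁, hW₁R, hmW₁⟩ := hres m₁ hm₁ hm₁p
      obtain ⟨W₂, hW₂R, hmW₂⟩ := hres m₂ hm₂ hm₂p
      have hLW : ∀ W, W ∈ A \ (thru A p ∪ thru A q) → L ≠ W := by
        rintro W hW rfl
        exact (Finset.mem_sdiff.mp hW).2 (Finset.mem_union_left _ hLS)
      have hW₁₂ : W₁ ≠ W₂ := by
        rintro rfl
        exact hm₁₂ (point_eq_point (hA L hLA) (hA W₁ (Finset.mem_sdiff.mp hW₁R).1)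
          (hLW W₁ hW₁R) hm₁.1.1 hm₂.1.1 hm₁.2 hmW₁ hm₂.2 hmW₂)
      -- one of m₁, m₂ lies on N
      have hmain : ∃ m : Submodule ℂ Vc, (IsMultPoint A m ∧ m ≤ L) ∧ m ≠ p ∧ m ≤ N := by
        rw [hRMN] at hW₁R hW₂R
        simp only [Finset.mem_insert, Finset.mem_singleton] at hW₁R hW₂R
        rcases hW₁R with rfl | rfl
        · rcases hW₂R with rfl | rfl
          · exact absurd rfl hW₁₂
          · exact ⟨m₂, hm₂, hm₂p, hmW₂⟩
        · exact ⟨m₁, hm₁, hm₁p, hmW₁⟩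
      obtain ⟨m, hm, hmp, hmN⟩ := hmain
      -- m does not lie on M
      have hmM : ¬ m ≤ M := by
        intro h
        have hmx : m = x := point_eq_point (hA M hMA) (hA N hNA) hMN hm.1.1 hx.1.1
          h hmN hxMN.1 hxMN.2
        subst hmx
        exact hmp (point_eq_point (hA L hLA) (hA e heA) hLne hm.1.1 hp hm.2 hx.2 hpL hpe)
      -- m does not lie on e
      have hme : ¬ m ≤ e := by
        intro h
        exact hmp (point_eq_point (hA L hLA) (hA e heA) hLne hm.1.1 hp hm.2 h hpL hpe)
      -- count lines through m : residual contributes only N, the p-pencil only L,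
      -- so some line of the q-pencil passes through m
      have hmq : m ≠ q := fun h => hqL (h ▸ hm.2)
      have h3 : 3 ≤ (thru A m).card := (mult_eq_thru A m) ▸ hm.1.2
      have c1 := hsing m p hm.1.1 hp hmp
      have cR : (thru A m ∩ (A \ (thru A p ∪ thru A q))).card ≤ 1 := by
        refine Finset.card_le_one.mpr ?_
        intro W hW W' hW'
        rw [Finset.mem_inter, hRMN] at hW hW'
        have h1 : W = N := by
          rcases Finset.mem_insert.mp hW.2 with rfl | h
          · exact absurd (mem_thru.mp hW.1).2 hmM
          · exact Finset.mem_singleton.mp h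
        have h2 : W' = N := by
          rcases Finset.mem_insert.mp hW'.2 with rfl | h
          · exact absurd (mem_thru.mp hW'.1).2 hmM
          · exact Finset.mem_singleton.mp h
        rw [h1, h2]
      have hc := hcover m
      have hpos : 0 < (thru A m ∩ thru A q).card := by omega
      obtain ⟨t, ht⟩ := Finset.card_pos.mp hpos
      rw [Finset.mem_inter, mem_thru, mem_thru] at ht
      have hte : t ≠ e := by
        rintro rfl
        exact hme ht.1.2
      exact ⟨t, Finset.mem_erase.mpr ⟨hte, mem_thru.mpr ht.2⟩,
        m, hm.1.1, hmp, hm.2, hmN, ht.1.2⟩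
    -- Step (iii): pigeonhole
    set f : Submodule ℂ Vc → Submodule ℂ Vc := fun L =>
      if h : ∃ t ∈ (thru A q).erase e, ∃ m : Submodule ℂ Vc,
          IsProjPoint m ∧ m ≠ p ∧ m ≤ L ∧ m ≤ N ∧ m ≤ t then h.choose else e with hf
    have hfspec : ∀ L ∈ (thru A p).erase e, f L ∈ (thru A q).erase e ∧
        ∃ m : Submodule ℂ Vc, IsProjPoint m ∧ m ≠ p ∧ m ≤ L ∧ m ≤ N ∧ m ≤ f L := by
      intro L hL
      have h := hkey L hL
      simp only [hf, dif_pos h]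
      exact h.choose_spec
    have hcards : ((thru A q).erase e).card < ((thru A p).erase e).card := by
      rw [Finset.card_erase_of_mem heT, Finset.card_erase_of_mem heS, hS6, hT5]
      omega
    obtain ⟨L, hL, L', hL', hLL', hff⟩ :=
      Finset.exists_ne_map_eq_of_card_lt_of_maps_to hcards (fun L hL => (hfspec L hL).1)
    obtain ⟨htT, m, hmpt, hmp, hmL, hmN, hmt⟩ := hfspec L hL
    obtain ⟨-, m', hm'pt, hm'p, hm'L, hm'N, hm't⟩ := hfspec L' hL'
    rw [← hff] at hm't
    have htA : f L ∈ A := hTsub (Finset.mem_of_mem_erase htT)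
    have htN : f L ≠ N := by
      intro h
      exact (Finset.mem_sdiff.mp hNR).2
        (Finset.mem_union_right _ (h ▸ Finset.mem_of_mem_erase htT))
    have hmm' : m = m' :=
      point_eq_point (hA _ htA) (hA N hNA) htN hmpt hm'pt hmt hmN hm't hm'N
    subst hmm'
    have hLA : L ∈ A := hSsub (Finset.mem_of_mem_erase hL)
    have hL'A : L' ∈ A := hSsub (Finset.mem_of_mem_erase hL')
    exact hmp (point_eq_point (hA L hLA) (hA L' hL'A) hLL' hmpt hp hmL hm'L
      (mem_thru.mp (Finset.mem_of_mem_erase hL)).2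
      (mem_thru.mp (Finset.mem_of_mem_erase hL')).2)
end

section
/- Set t_1 = 1/2 and let s = √(1/2) be the positive real square root. Define A_+ to be the arrangement of the 12 projective lines {X=0}, {Y=0}, {Z=0}, {X-Z=0}, {Y-Z=0}, {X-t_1 Z=0}, {X-t_2 Z=0}, {X-t_3 Z=0}, {X+(t_2-1)Y-t_2 Z=0}, {X+(t_2-t_1)Y-t_2 Z=0}, {X-t_3 Y=0}, {X+(t_1-t_2)Y-t_1 Z=0} with t_2 = s and t_3 = 1 - s, and define A_- to be the arrangement of the same 12 lines with t_2 = -s and t_3 = 1 + s. Then A_+ and A_- are lattice isomorphic, but they are not projectively equivalent. -/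
open Submodule Module

/-! ### Auxiliary material: a `ℤ[√2]`-model of the coefficient arithmetic -/

abbrev Kp : Type := ℤ × ℤ
abbrev K3 : Type := Kp × Kp × Kp

def kadd (x y : Kp) : Kp := (x.1 + y.1, x.2 + y.2)
def ksub (x y : Kp) : Kp := (x.1 - y.1, x.2 - y.2)
def kmul (x y : Kp) : Kp := (x.1 * y.1 + 2 * x.2 * y.2, x.1 * y.2 + x.2 * y.1)

def dotK (x y : K3) : Kp := kadd (kmul x.1 y.1) (kadd (kmul x.2.1 y.2.1) (kmul x.2.2 y.2.2))
def crossK (x y : K3) : K3 :=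
  (ksub (kmul x.2.1 y.2.2) (kmul x.2.2 y.2.1),
   ksub (kmul x.2.2 y.1) (kmul x.1 y.2.2),
   ksub (kmul x.1 y.2.1) (kmul x.2.1 y.1))

/-- The coefficient table of the 12 lines (entries `(p,q)` denote `p + q√2`),
with `t₂` corresponding to `√2/2` and everything scaled to be integral. -/
def cL : Fin 12 → K3 :=
  ![((1,0),(0,0),(0,0)), ((0,0),(1,0),(0,0)), ((0,0),(0,0),(1,0)),
    ((1,0),(0,0),(-1,0)), ((0,0),(1,0),(-1,0)),
    ((2,0),(0,0),(-1,0)), ((2,0),(0,0),(0,-1)), ((2,0),(0,0),(-2,1)),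
    ((2,0),(-2,1),(0,-1)), ((2,0),(-1,1),(0,-1)),
    ((2,0),(-2,1),(0,0)), ((2,0),(1,-1),(-1,0))]

def dep (a b c : Fin 12) : Prop := dotK (cL c) (crossK (cL a) (cL b)) ≠ (0,0)

instance (a b c : Fin 12) : Decidable (dep a b c) := by unfold dep; infer_instance

def D3 (a : Fin 12) : ℕ :=
  Fintype.card {p : Fin 12 × Fin 12 // p.1 ≠ p.2 ∧ p.1 ≠ a ∧ p.2 ≠ a ∧ ¬ dep a p.1 p.2}

def cnt2 (a b : Fin 12) : ℕ :=
  Fintype.card {k : Fin 12 // k ≠ a ∧ k ≠ b ∧ ¬ dep a b k}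

/-- `p + q·√2`, written via `2t` where `t = ±√(1/2)`. -/
noncomputable def phi (t : ℂ) (x : Kp) : ℂ := (x.1 : ℂ) + (x.2 : ℂ) * (2 * t)

lemma phi_add (t : ℂ) (x y : Kp) : phi t (kadd x y) = phi t x + phi t y := by
  simp [phi, kadd]; ring

lemma phi_sub (t : ℂ) (x y : Kp) : phi t (ksub x y) = phi t x - phi t y := by
  simp [phi, ksub]; ring

lemma phi_mul {t : ℂ} (ht : t^2 = 1/2) (x y : Kp) : phi t (kmul x y) = phi t x * phi t y := by
  simp only [phi, kmul]
  push_cast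
  linear_combination (-4 * (x.2:ℂ) * y.2) * ht

lemma phi_eq_zero {t : ℂ} (hq : ∀ q : ℚ, (q : ℂ) ≠ t) {x : Kp} (hx : phi t x = 0) : x = 0 := by
  rcases eq_or_ne x.2 0 with h2 | h2
  · have : (x.1 : ℂ) = 0 := by simpa [phi, h2] using hx
    have h1 : x.1 = 0 := by exact_mod_cast this
    exact Prod.ext h1 h2
  · exfalso
    apply hq (- (x.1 : ℚ) / (2 * (x.2 : ℚ)))
    have hx2 : ((x.2 : ℂ)) ≠ 0 := by exact_mod_cast h2
    have h : (x.1 : ℂ) + (x.2:ℂ) * (2*t) = 0 := hx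
    push_cast
    field_simp
    linear_combination -h

lemma dot_cross_left (x y : K3) : dotK x (crossK x y) = ((0,0) : Kp) := by
  simp only [dotK, crossK, kadd, ksub, kmul, Prod.ext_iff, Prod.mk.injEq]
  constructor <;> ring

lemma dot_cross_right (x y : K3) : dotK y (crossK x y) = ((0,0) : Kp) := by
  simp only [dotK, crossK, kadd, ksub, kmul, Prod.ext_iff, Prod.mk.injEq]
  constructor <;> ring

/-! ### Basic line lemmas over `ℂ` -/

lemma mem_lineEq {a b c : ℂ} {v : Vc} :
    v ∈ lineEq a b c ↔ a * v 0 + b * v 1 + c * v 2 = 0 := by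
  simp [lineEq, LinearMap.mem_ker, LinearMap.add_apply, LinearMap.smul_apply, smul_eq_mul]

lemma lineEq_smul {k a b c : ℂ} (hk : k ≠ 0) : lineEq (k*a) (k*b) (k*c) = lineEq a b c := by
  ext v
  simp only [mem_lineEq]
  constructor
  · intro h
    have h' : k * (a * v 0 + b * v 1 + c * v 2) = 0 := by linear_combination h
    rcases mul_eq_zero.1 h' with h''|h''
    · exact absurd h'' hk
    · exact h''
  · intro h
    rw [show k*a*v 0 + k*b*v 1 + k*c*v 2 = k * (a * v 0 + b * v 1 + c * v 2) by ring, h, mul_zero]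

lemma finrank_lineEq {a b c : ℂ} (h : ¬(a = 0 ∧ b = 0 ∧ c = 0)) :
    finrank ℂ (lineEq a b c) = 2 := by
  set f : Vc →ₗ[ℂ] ℂ := a • (LinearMap.proj 0 : Vc →ₗ[ℂ] ℂ) + b • (LinearMap.proj 1 : Vc →ₗ[ℂ] ℂ)
    + c • (LinearMap.proj 2 : Vc →ₗ[ℂ] ℂ) with hf
  have hr : LinearMap.range f = ⊤ := by
    rw [LinearMap.range_eq_top]
    have hv : ∃ v : Vc, f v ≠ 0 := by
      have hfv : ∀ v : Vc, f v = a * v 0 + b * v 1 + c * v 2 := by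
        intro v; simp [hf, LinearMap.add_apply, LinearMap.smul_apply, smul_eq_mul]
      by_contra hc
      push_neg at hc
      refine h ⟨?_, ?_, ?_⟩
      · have := hc ![1,0,0]; rw [hfv] at this; simpa using this
      · have := hc ![0,1,0]; rw [hfv] at this; simpa using this
      · have := hc ![0,0,1]; rw [hfv] at this; simpa using this
    obtain ⟨v, hv⟩ := hv
    intro w
    exact ⟨(w / f v) • v, by simp [map_smul, smul_eq_mul]; field_simp⟩
  have hker : lineEq a b c = LinearMap.ker f := rfl
  have hsum := LinearMap.finrank_range_add_finrank_ker f
  rw [hr] at hsum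
  have h1 : finrank ℂ (⊤ : Submodule ℂ ℂ) = 1 := by simp
  have h3 : finrank ℂ Vc = 3 := by simp [Vc]
  rw [h1, h3] at hsum
  rw [hker]
  omega

/-! ### The twelve lines, parameterized by `t = ±√(1/2)` -/

noncomputable def lineL (t : ℂ) (i : Fin 12) : Submodule ℂ Vc :=
  lineEq (phi t (cL i).1) (phi t (cL i).2.1) (phi t (cL i).2.2)

lemma mem_lineL {t : ℂ} {i : Fin 12} {v : Vc} :
    v ∈ lineL t i ↔
      phi t (cL i).1 * v 0 + phi t (cL i).2.1 * v 1 + phi t (cL i).2.2 * v 2 = 0 := by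
  simp [lineL, mem_lineEq]

noncomputable def vecC (t : ℂ) (w : K3) : Vc := ![phi t w.1, phi t w.2.1, phi t w.2.2]

lemma dot_phi {t : ℂ} (ht : t^2 = 1/2) (x w : K3) :
    phi t x.1 * phi t w.1 + phi t x.2.1 * phi t w.2.1 + phi t x.2.2 * phi t w.2.2
      = phi t (dotK x w) := by
  simp [dotK, phi_add, phi_mul ht]; ring

lemma mem_lineL_of_dot {t : ℂ} (ht : t^2 = 1/2) {i : Fin 12} {w : K3}
    (h : dotK (cL i) w = 0) : vecC t w ∈ lineL t i := by
  rw [mem_lineL]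
  have h0 : (vecC t w) 0 = phi t w.1 := by simp [vecC]
  have h1 : (vecC t w) 1 = phi t w.2.1 := by simp [vecC]
  have h2 : (vecC t w) 2 = phi t w.2.2 := by simp [vecC]
  rw [h0, h1, h2, dot_phi ht, h]
  simp [phi]

lemma vecC_ne_zero {t : ℂ} (hq : ∀ q : ℚ, (q : ℂ) ≠ t) {w : K3}
    (hw : w ≠ ((0,0),(0,0),(0,0))) : vecC t w ≠ 0 := by
  intro h
  apply hw
  have h0 : phi t w.1 = 0 := by have := congrFun h 0; simpa [vecC] using this
  have h1 : phi t w.2.1 = 0 := by have := congrFun h 1; simpa [vecC] using this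
  have h2 : phi t w.2.2 = 0 := by have := congrFun h 2; simpa [vecC] using this
  exact Prod.ext (phi_eq_zero hq h0) (Prod.ext (phi_eq_zero hq h1) (phi_eq_zero hq h2))

lemma cross_cL_ne : ∀ i j : Fin 12, i ≠ j → crossK (cL i) (cL j) ≠ ((0,0),(0,0),(0,0)) := by
  decide

lemma cL_ne_zero : ∀ i : Fin 12, cL i ≠ ((0,0),(0,0),(0,0)) := by decide

lemma finrank_lineL {t : ℂ} (hq : ∀ q : ℚ, (q : ℂ) ≠ t) (i : Fin 12) :
    finrank ℂ (lineL t i) = 2 := by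
  apply finrank_lineEq
  rintro ⟨h1, h2, h3⟩
  exact cL_ne_zero i
    (Prod.ext (phi_eq_zero hq h1) (Prod.ext (phi_eq_zero hq h2) (phi_eq_zero hq h3)))

/-- Two lines with a nonzero "cross product" of coefficient vectors are distinct. -/
lemma lineL_ne {t : ℂ} (ht : t^2 = 1/2) (hq : ∀ q : ℚ, (q : ℂ) ≠ t)
    {i j : Fin 12} (hij : i ≠ j) : lineL t i ≠ lineL t j := by
  intro he
  set x := cL i with hx
  set y := cL j with hy
  have hw : crossK x y ≠ ((0,0),(0,0),(0,0)) := cross_cL_ne i j hij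
  have hdisj : (crossK x y).1 ≠ 0 ∨ (crossK x y).2.1 ≠ 0 ∨ (crossK x y).2.2 ≠ 0 := by
    by_contra hcon
    push_neg at hcon
    exact hw (Prod.ext hcon.1 (Prod.ext hcon.2.1 hcon.2.2))
  have hmemi : ∀ v : Vc, (phi t x.1 * v 0 + phi t x.2.1 * v 1 + phi t x.2.2 * v 2 = 0) →
      phi t y.1 * v 0 + phi t y.2.1 * v 1 + phi t y.2.2 * v 2 = 0 := by
    intro v hv
    have : v ∈ lineL t j := he ▸ (mem_lineL.mpr hv)
    exact mem_lineL.mp this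
  rcases hdisj with hc | hc | hc
  · have hP : phi t ((crossK x y).1) ≠ 0 := fun h => hc (phi_eq_zero hq h)
    have hexp : phi t ((crossK x y).1) = phi t x.2.1 * phi t y.2.2 - phi t x.2.2 * phi t y.2.1 := by
      simp [crossK, phi_sub, phi_mul ht]
    have hm := hmemi ![0, phi t x.2.2, -(phi t x.2.1)] (by simp; ring)
    simp at hm
    apply hP
    rw [hexp]
    linear_combination -hm
  · have hP : phi t ((crossK x y).2.1) ≠ 0 := fun h => hc (phi_eq_zero hq h)
    have hexp : phi t ((crossK x y).2.1) = phi t x.2.2 * phi t y.1 - phi t x.1 * phi t y.2.2 := by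
      simp [crossK, phi_sub, phi_mul ht]
    have hm := hmemi ![phi t x.2.2, 0, -(phi t x.1)] (by simp; ring)
    simp at hm
    apply hP
    rw [hexp]
    linear_combination hm
  · have hP : phi t ((crossK x y).2.2) ≠ 0 := fun h => hc (phi_eq_zero hq h)
    have hexp : phi t ((crossK x y).2.2) = phi t x.1 * phi t y.2.1 - phi t x.2.1 * phi t y.1 := by
      simp [crossK, phi_sub, phi_mul ht]
    have hm := hmemi ![phi t x.2.1, -(phi t x.1), 0] (by simp; ring)
    simp at hm
    apply hP
    rw [hexp]
    linear_combination -hm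

/-! ### Cramer-style rank computations -/

lemma cramer_zero {a1 b1 c1 a2 b2 c2 a3 b3 c3 x y z : ℂ}
    (h1 : a1*x + b1*y + c1*z = 0) (h2 : a2*x + b2*y + c2*z = 0) (h3 : a3*x + b3*y + c3*z = 0)
    (hd : a3*(b1*c2 - c1*b2) + b3*(c1*a2 - a1*c2) + c3*(a1*b2 - b1*a2) ≠ 0) :
    x = 0 ∧ y = 0 ∧ z = 0 := by
  set D : ℂ := a3*(b1*c2 - c1*b2) + b3*(c1*a2 - a1*c2) + c3*(a1*b2 - b1*a2) with hD
  refine ⟨?_, ?_, ?_⟩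
  · have h : D * x = 0 := by
      rw [hD]; linear_combination (b2*c3 - b3*c2)*h1 + (b3*c1 - b1*c3)*h2 + (b1*c2 - b2*c1)*h3
    rcases mul_eq_zero.1 h with h | h
    · exact absurd h hd
    · exact h
  · have h : D * y = 0 := by
      rw [hD]; linear_combination (c2*a3 - c3*a2)*h1 + (c3*a1 - c1*a3)*h2 + (c1*a2 - c2*a1)*h3
    rcases mul_eq_zero.1 h with h | h
    · exact absurd h hd
    · exact h
  · have h : D * z = 0 := by
      rw [hD]; linear_combination (a2*b3 - a3*b2)*h1 + (a3*b1 - a1*b3)*h2 + (a1*b2 - a2*b1)*h3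
    rcases mul_eq_zero.1 h with h | h
    · exact absurd h hd
    · exact h

lemma det_phi {t : ℂ} (ht : t^2 = 1/2) (x y z : K3) :
    phi t z.1 * ((phi t x.2.1)*(phi t y.2.2) - (phi t x.2.2)*(phi t y.2.1))
      + phi t z.2.1 * ((phi t x.2.2)*(phi t y.1) - (phi t x.1)*(phi t y.2.2))
      + phi t z.2.2 * ((phi t x.1)*(phi t y.2.1) - (phi t x.2.1)*(phi t y.1))
      = phi t (dotK z (crossK x y)) := by
  simp [dotK, crossK, phi_add, phi_sub, phi_mul ht]; ring

/-- If some triple in `S` is independent, the intersection is trivial. -/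
lemma lineL_iInf_bot {t : ℂ} (ht : t^2 = 1/2) (hq : ∀ q : ℚ, (q : ℂ) ≠ t)
    {S : Finset (Fin 12)} {i j k : Fin 12} (hi : i ∈ S) (hj : j ∈ S) (hk : k ∈ S)
    (hd : dep i j k) : (⨅ m ∈ S, lineL t m) = ⊥ := by
  rw [eq_bot_iff]
  intro v hv
  have hmem : ∀ m ∈ S, v ∈ lineL t m := by
    intro m hm
    exact (Submodule.mem_iInf _).mp ((Submodule.mem_iInf _).mp hv m) hm
  have e1 := mem_lineL.mp (hmem i hi)
  have e2 := mem_lineL.mp (hmem j hj)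
  have e3 := mem_lineL.mp (hmem k hk)
  have hD : phi t (cL k).1 * ((phi t (cL i).2.1)*(phi t (cL j).2.2) - (phi t (cL i).2.2)*(phi t (cL j).2.1))
      + phi t (cL k).2.1 * ((phi t (cL i).2.2)*(phi t (cL j).1) - (phi t (cL i).1)*(phi t (cL j).2.2))
      + phi t (cL k).2.2 * ((phi t (cL i).1)*(phi t (cL j).2.1) - (phi t (cL i).2.1)*(phi t (cL j).1)) ≠ 0 := by
    rw [det_phi ht]
    intro h
    exact hd (phi_eq_zero hq h)
  obtain ⟨hx, hy, hz⟩ := cramer_zero e1 e2 e3 hD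
  simp only [Submodule.mem_bot]
  funext m
  fin_cases m
  · exact hx
  · exact hy
  · exact hz

/-- If all lines of `S` pass through the common point and `S` has two distinct lines,
the intersection is 1-dimensional. -/
lemma finrank_iInf_one {t : ℂ} (ht : t^2 = 1/2) (hq : ∀ q : ℚ, (q : ℂ) ≠ t)
    {S : Finset (Fin 12)} {i j : Fin 12} (hi : i ∈ S) (hj : j ∈ S) (hij : i ≠ j)
    (hall : ∀ k ∈ S, dotK (cL k) (crossK (cL i) (cL j)) = (0,0)) :
    finrank ℂ ↥(⨅ m ∈ S, lineL t m) = 1 := by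
  set w : K3 := crossK (cL i) (cL j) with hw
  have hv : vecC t w ≠ 0 := vecC_ne_zero hq (cross_cL_ne i j hij)
  have hvmem : vecC t w ∈ ⨅ m ∈ S, lineL t m := by
    rw [Submodule.mem_iInf]
    intro m
    rw [Submodule.mem_iInf]
    intro hm
    exact mem_lineL_of_dot ht (hall m hm)
  have hlow : 1 ≤ finrank ℂ ↥(⨅ m ∈ S, lineL t m) := by
    have hsp : span ℂ {vecC t w} ≤ ⨅ m ∈ S, lineL t m := by
      rw [Submodule.span_le, Set.singleton_subset_iff]; exact hvmem
    calc 1 = finrank ℂ (span ℂ {vecC t w}) := (finrank_span_singleton hv).symm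
    _ ≤ _ := Submodule.finrank_mono hsp
  have hup : finrank ℂ ↥(⨅ m ∈ S, lineL t m) < 2 := by
    by_contra hcon
    push_neg at hcon
    have hle_i : (⨅ m ∈ S, lineL t m) ≤ lineL t i := biInf_le _ hi
    have hle_j : (⨅ m ∈ S, lineL t m) ≤ lineL t j := biInf_le _ hj
    have hei : (⨅ m ∈ S, lineL t m) = lineL t i :=
      Submodule.eq_of_le_of_finrank_le hle_i (by rw [finrank_lineL hq i]; exact hcon)
    have hej : (⨅ m ∈ S, lineL t m) = lineL t j :=
      Submodule.eq_of_le_of_finrank_le hle_j (by rw [finrank_lineL hq j]; exact hcon)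
    exact lineL_ne ht hq hij (hei ▸ hej)
  omega

/-- Main rank comparison: for two admissible parameters, all intersection ranks agree. -/
lemma finrank_iInf_eq {t t' : ℂ} (ht : t^2 = 1/2) (hq : ∀ q : ℚ, (q : ℂ) ≠ t)
    (ht' : t'^2 = 1/2) (hq' : ∀ q : ℚ, (q : ℂ) ≠ t')
    (S : Finset (Fin 12)) (hS : S.Nonempty) :
    finrank ℂ ↥(⨅ m ∈ S, lineL t m) = finrank ℂ ↥(⨅ m ∈ S, lineL t' m) := by
  by_cases h2 : ∃ i ∈ S, ∃ j ∈ S, i ≠ j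
  · obtain ⟨i, hi, j, hj, hij⟩ := h2
    by_cases hall : ∀ k ∈ S, dotK (cL k) (crossK (cL i) (cL j)) = (0,0)
    · rw [finrank_iInf_one ht hq hi hj hij hall, finrank_iInf_one ht' hq' hi hj hij hall]
    · push_neg at hall
      obtain ⟨k, hk, hdk⟩ := hall
      have hd : dep i j k := hdk
      rw [lineL_iInf_bot ht hq hi hj hk hd, lineL_iInf_bot ht' hq' hi hj hk hd]
  · push_neg at h2
    obtain ⟨i, hi⟩ := hS
    have hsing : S = {i} := by
      apply Finset.eq_singleton_iff_unique_mem.mpr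
      exact ⟨hi, fun x hx => h2 x hx i hi⟩
    subst hsing
    have he : ∀ u : ℂ, (⨅ m ∈ ({i} : Finset (Fin 12)), lineL u m) = lineL u i := by
      intro u; simp
    rw [he t, he t', finrank_lineL hq i, finrank_lineL hq' i]

/-! ### The specific parameter `√(1/2)` -/

noncomputable def sC : ℂ := ((Real.sqrt (1 / 2) : ℝ) : ℂ)

lemma sC_sq : sC^2 = 1/2 := by
  have h : (Real.sqrt (1/2))^2 = (1/2 : ℝ) := Real.sq_sqrt (by norm_num)
  have : sC^2 = (((Real.sqrt (1/2))^2 : ℝ) : ℂ) := by rw [sC]; push_cast; ring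
  rw [this, h]; norm_num

lemma sC_ne_zero : sC ≠ 0 := by
  have h : Real.sqrt (1/2) > 0 := Real.sqrt_pos.mpr (by norm_num)
  simpa [sC, Complex.ofReal_ne_zero] using ne_of_gt h

lemma sC_irr : ∀ q : ℚ, (q : ℂ) ≠ sC := by
  intro q h
  have hr : (q : ℝ) = Real.sqrt (1/2) := by
    have : ((q : ℝ) : ℂ) = ((Real.sqrt (1/2) : ℝ) : ℂ) := by push_cast; exact h
    exact_mod_cast this
  have hq2 : ((q:ℝ))^2 = 1/2 := by rw [hr]; exact Real.sq_sqrt (by norm_num)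
  apply irrational_sqrt_two
  refine ⟨|2*q|, ?_⟩
  have h2 : (((2*q : ℚ)):ℝ)^2 = 2 := by push_cast; nlinarith [hq2]
  rw [show ((|2*q| : ℚ) : ℝ) = |((2*q : ℚ) : ℝ)| by push_cast; ring]
  rw [← Real.sqrt_sq_eq_abs, h2]

lemma msC_sq : (-sC)^2 = 1/2 := by rw [neg_sq]; exact sC_sq

lemma msC_irr : ∀ q : ℚ, (q : ℂ) ≠ -sC := by
  intro q h
  apply sC_irr (-q)
  push_cast
  linear_combination -h

/-! ### The arrangement as a finset, and its enumeration -/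

open Classical in
noncomputable def arr (t : ℂ) : Finset (Submodule ℂ Vc) :=
  ([lineEq 1 0 0, lineEq 0 1 0, lineEq 0 0 1,
    lineEq 1 0 (-1), lineEq 0 1 (-1),
    lineEq 1 0 (-(1/2 : ℂ)), lineEq 1 0 (-t), lineEq 1 0 (-(1 - t)),
    lineEq 1 (t - 1) (-t), lineEq 1 (t - 1/2) (-t),
    lineEq 1 (-(1 - t)) 0, lineEq 1 (1/2 - t) (-(1/2 : ℂ))] : List (Submodule ℂ Vc)).toFinset

lemma lineL_vals (t : ℂ) :
    lineL t 0 = lineEq 1 0 0 ∧ lineL t 1 = lineEq 0 1 0 ∧ lineL t 2 = lineEq 0 0 1 ∧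
    lineL t 3 = lineEq 1 0 (-1) ∧ lineL t 4 = lineEq 0 1 (-1) ∧
    lineL t 5 = lineEq 1 0 (-(1/2 : ℂ)) ∧ lineL t 6 = lineEq 1 0 (-t) ∧
    lineL t 7 = lineEq 1 0 (-(1 - t)) ∧ lineL t 8 = lineEq 1 (t - 1) (-t) ∧
    lineL t 9 = lineEq 1 (t - 1/2) (-t) ∧ lineL t 10 = lineEq 1 (-(1 - t)) 0 ∧
    lineL t 11 = lineEq 1 (1/2 - t) (-(1/2 : ℂ)) := by
  have h2 : (2 : ℂ) ≠ 0 := by norm_num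
  refine ⟨?_, ?_, ?_, ?_, ?_, ?_, ?_, ?_, ?_, ?_, ?_, ?_⟩
  · rw [lineL, show cL 0 = ((1,0),(0,0),(0,0)) from rfl]
    congr 1 <;> (norm_num [phi]; try ring)
  · rw [lineL, show cL 1 = ((0,0),(1,0),(0,0)) from rfl]
    congr 1 <;> (norm_num [phi]; try ring)
  · rw [lineL, show cL 2 = ((0,0),(0,0),(1,0)) from rfl]
    congr 1 <;> (norm_num [phi]; try ring)
  · rw [lineL, show cL 3 = ((1,0),(0,0),(-1,0)) from rfl]
    congr 1 <;> (norm_num [phi]; try ring)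
  · rw [lineL, show cL 4 = ((0,0),(1,0),(-1,0)) from rfl]
    congr 1 <;> (norm_num [phi]; try ring)
  · rw [lineL, show cL 5 = ((2,0),(0,0),(-1,0)) from rfl,
      ← lineEq_smul (a := 1) (b := 0) (c := -(1/2 : ℂ)) h2]
    congr 1 <;> (norm_num [phi]; try ring)
  · rw [lineL, show cL 6 = ((2,0),(0,0),(0,-1)) from rfl,
      ← lineEq_smul (a := 1) (b := 0) (c := -t) h2]
    congr 1 <;> (norm_num [phi]; try ring)
  · rw [lineL, show cL 7 = ((2,0),(0,0),(-2,1)) from rfl,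
      ← lineEq_smul (a := 1) (b := 0) (c := -(1-t)) h2]
    congr 1 <;> (norm_num [phi]; try ring)
  · rw [lineL, show cL 8 = ((2,0),(-2,1),(0,-1)) from rfl,
      ← lineEq_smul (a := 1) (b := t - 1) (c := -t) h2]
    congr 1 <;> (norm_num [phi]; try ring)
  · rw [lineL, show cL 9 = ((2,0),(-1,1),(0,-1)) from rfl,
      ← lineEq_smul (a := 1) (b := t - 1/2) (c := -t) h2]
    congr 1 <;> (norm_num [phi]; try ring)
  · rw [lineL, show cL 10 = ((2,0),(-2,1),(0,0)) from rfl,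
      ← lineEq_smul (a := 1) (b := -(1 - t)) (c := 0) h2]
    congr 1 <;> (norm_num [phi]; try ring)
  · rw [lineL, show cL 11 = ((2,0),(1,-1),(-1,0)) from rfl,
      ← lineEq_smul (a := 1) (b := 1/2 - t) (c := -(1/2 : ℂ)) h2]
    congr 1 <;> (norm_num [phi]; try ring)

lemma arr_enum (t : ℂ) : ∀ M, M ∈ arr t ↔ ∃ i, lineL t i = M := by
  obtain ⟨h0, h1, h2, h3, h4, h5, h6, h7, h8, h9, h10, h11⟩ := lineL_vals t
  intro M
  simp only [arr, List.mem_toFinset, List.mem_cons, List.not_mem_nil, or_false]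
  constructor
  · rintro (rfl|rfl|rfl|rfl|rfl|rfl|rfl|rfl|rfl|rfl|rfl|rfl)
    exacts [⟨0, h0⟩, ⟨1, h1⟩, ⟨2, h2⟩, ⟨3, h3⟩, ⟨4, h4⟩, ⟨5, h5⟩, ⟨6, h6⟩, ⟨7, h7⟩,
      ⟨8, h8⟩, ⟨9, h9⟩, ⟨10, h10⟩, ⟨11, h11⟩]
  · rintro ⟨i, rfl⟩
    fin_cases i
    · exact Or.inl h0
    · exact Or.inr (Or.inl h1)
    · exact Or.inr (Or.inr (Or.inl h2))
    · exact Or.inr (Or.inr (Or.inr (Or.inl h3)))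
    · exact Or.inr (Or.inr (Or.inr (Or.inr (Or.inl h4))))
    · exact Or.inr (Or.inr (Or.inr (Or.inr (Or.inr (Or.inl h5)))))
    · exact Or.inr (Or.inr (Or.inr (Or.inr (Or.inr (Or.inr (Or.inl h6))))))
    · exact Or.inr (Or.inr (Or.inr (Or.inr (Or.inr (Or.inr (Or.inr (Or.inl h7)))))))
    · exact Or.inr (Or.inr (Or.inr (Or.inr (Or.inr (Or.inr (Or.inr (Or.inr (Or.inl h8))))))))
    · exact Or.inr (Or.inr (Or.inr (Or.inr (Or.inr (Or.inr (Or.inr (Or.inr (Or.inr (Or.inl h9)))))))))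
    · exact Or.inr (Or.inr (Or.inr (Or.inr (Or.inr (Or.inr (Or.inr (Or.inr (Or.inr (Or.inr (Or.inl h10))))))))))
    · exact Or.inr (Or.inr (Or.inr (Or.inr (Or.inr (Or.inr (Or.inr (Or.inr (Or.inr (Or.inr (Or.inr h11))))))))))

lemma lineL_injective {t : ℂ} (ht : t^2 = 1/2) (hq : ∀ q : ℚ, (q : ℂ) ≠ t) :
    Function.Injective (lineL t) := by
  intro i j h
  by_contra hne
  exact lineL_ne ht hq hne h

lemma part1 : LatticeIso 12 (arr sC) (arr (-sC)) := by
  refine ⟨lineL sC, lineL (-sC), lineL_injective sC_sq sC_irr,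
    lineL_injective msC_sq msC_irr, arr_enum sC, arr_enum (-sC), ?_⟩
  intro S hS
  exact finrank_iInf_eq sC_sq sC_irr msC_sq msC_irr S hS

/-! ### Part 2: no projective equivalence -/

lemma map_eq_bot_iff' (g : Vc ≃ₗ[ℂ] Vc) (p : Submodule ℂ Vc) :
    Submodule.map (g : Vc →ₗ[ℂ] Vc) p = ⊥ ↔ p = ⊥ := by
  constructor
  · intro h
    rw [eq_bot_iff]
    intro v hv
    have hm : (g : Vc →ₗ[ℂ] Vc) v ∈ Submodule.map (g : Vc →ₗ[ℂ] Vc) p :=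
      Submodule.mem_map_of_mem hv
    rw [h, Submodule.mem_bot] at hm
    have : v = 0 := by
      apply g.injective
      simpa using hm
    simp [this]
  · rintro rfl
    exact Submodule.map_bot _

/-- Bridge: triple intersection triviality is the combinatorial dependency predicate. -/
lemma tripleBot {t : ℂ} (ht : t^2 = 1/2) (hq : ∀ q : ℚ, (q : ℂ) ≠ t)
    {a b c : Fin 12} (hab : a ≠ b) :
    (lineL t a ⊓ lineL t b ⊓ lineL t c = ⊥) ↔ dep a b c := by
  constructor
  · intro h
    by_contra hdep
    have hz : dotK (cL c) (crossK (cL a) (cL b)) = (0,0) := by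
      by_contra h'; exact hdep h'
    set w := crossK (cL a) (cL b) with hw
    have hv : vecC t w ≠ 0 := vecC_ne_zero hq (cross_cL_ne a b hab)
    have hmem : vecC t w ∈ lineL t a ⊓ lineL t b ⊓ lineL t c := by
      refine Submodule.mem_inf.mpr ⟨Submodule.mem_inf.mpr ⟨?_, ?_⟩, ?_⟩
      · exact mem_lineL_of_dot ht (dot_cross_left (cL a) (cL b))
      · exact mem_lineL_of_dot ht (dot_cross_right (cL a) (cL b))
      · exact mem_lineL_of_dot ht hz
    rw [h, Submodule.mem_bot] at hmem
    exact hv hmem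
  · intro hd
    rw [eq_bot_iff]
    intro v hv
    rw [Submodule.mem_inf, Submodule.mem_inf] at hv
    obtain ⟨⟨hva, hvb⟩, hvc⟩ := hv
    have e1 := mem_lineL.mp hva
    have e2 := mem_lineL.mp hvb
    have e3 := mem_lineL.mp hvc
    have hD : phi t (cL c).1 * ((phi t (cL a).2.1)*(phi t (cL b).2.2) - (phi t (cL a).2.2)*(phi t (cL b).2.1))
        + phi t (cL c).2.1 * ((phi t (cL a).2.2)*(phi t (cL b).1) - (phi t (cL a).1)*(phi t (cL b).2.2))
        + phi t (cL c).2.2 * ((phi t (cL a).1)*(phi t (cL b).2.1) - (phi t (cL a).2.1)*(phi t (cL b).1)) ≠ 0 := by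
      rw [det_phi ht]
      intro h
      exact hd (phi_eq_zero hq h)
    obtain ⟨hx, hy, hz⟩ := cramer_zero e1 e2 e3 hD
    simp only [Submodule.mem_bot]
    funext m
    fin_cases m
    · exact hx
    · exact hy
    · exact hz

lemma part2 : ¬ ProjEquiv (arr sC) (arr (-sC)) := by
  rintro ⟨g, hg⟩
  have hA := arr_enum sC
  have hB := arr_enum (-sC)
  -- construct σ
  have hex : ∀ i : Fin 12, ∃ j : Fin 12, lineL (-sC) j = Submodule.map (g : Vc →ₗ[ℂ] Vc) (lineL sC i) := by
    intro i
    have hmemA : lineL sC i ∈ (arr sC : Set (Submodule ℂ Vc)) := by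
      rw [Finset.mem_coe]
      exact (hA (lineL sC i)).mpr ⟨i, rfl⟩
    have : Submodule.map (g : Vc →ₗ[ℂ] Vc) (lineL sC i) ∈ (arr (-sC) : Set (Submodule ℂ Vc)) := by
      rw [← hg]
      exact ⟨lineL sC i, hmemA, rfl⟩
    rw [Finset.mem_coe] at this
    exact (hB _).mp this
  choose σ hσ using hex
  have hmapinj : Function.Injective
      (fun p : Submodule ℂ Vc => Submodule.map (g : Vc →ₗ[ℂ] Vc) p) :=
    Submodule.map_injective_of_injective g.injective
  have hσinj : Function.Injective σ := by
    intro i j h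
    apply lineL_injective sC_sq sC_irr
    apply hmapinj
    show Submodule.map (g : Vc →ₗ[ℂ] Vc) (lineL sC i) = Submodule.map (g : Vc →ₗ[ℂ] Vc) (lineL sC j)
    rw [← hσ i, ← hσ j, h]
  -- dependency preservation
  have hdep : ∀ a b c : Fin 12, a ≠ b → (dep a b c ↔ dep (σ a) (σ b) (σ c)) := by
    intro a b c hab
    have hab' : σ a ≠ σ b := fun h => hab (hσinj h)
    rw [← tripleBot sC_sq sC_irr hab, ← tripleBot msC_sq msC_irr hab']
    rw [hσ a, hσ b, hσ c]
    rw [← Submodule.map_inf (g : Vc →ₗ[ℂ] Vc) g.injective,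
      ← Submodule.map_inf (g : Vc →ₗ[ℂ] Vc) g.injective]
    exact (map_eq_bot_iff' g _).symm
  -- the induced permutation
  have hσbij : Function.Bijective σ := Finite.injective_iff_bijective.mp hσinj
  let σE : Equiv.Perm (Fin 12) := Equiv.ofBijective σ hσbij
  have hσE : ∀ i, σE i = σ i := fun i => rfl
  -- counting invariance
  have hD3 : ∀ a : Fin 12, D3 (σ a) = D3 a := by
    intro a
    apply (Fintype.card_congr _).symm
    refine (Equiv.prodCongr σE σE).subtypeEquiv ?_
    intro p
    simp only [Equiv.prodCongr_apply, Prod.map, hσE]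
    constructor
    · rintro ⟨h1, h2, h3, h4⟩
      exact ⟨fun h => h1 (hσinj h), fun h => h2 (hσinj h), fun h => h3 (hσinj h),
        fun hd => h4 ((hdep a p.1 p.2 (fun h => h2 h.symm)).mpr hd)⟩
    · rintro ⟨h1, h2, h3, h4⟩
      have h2' : p.1 ≠ a := fun h => h2 (congrArg σ h)
      exact ⟨fun h => h1 (congrArg σ h), h2', fun h => h3 (congrArg σ h),
        fun hd => h4 ((hdep a p.1 p.2 (fun h => h2' h.symm)).mp hd)⟩
  have hcnt2 : ∀ a b : Fin 12, a ≠ b → cnt2 (σ a) (σ b) = cnt2 a b := by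
    intro a b hab
    apply (Fintype.card_congr _).symm
    refine σE.subtypeEquiv ?_
    intro k
    simp only [hσE]
    constructor
    · rintro ⟨h1, h2, h3⟩
      exact ⟨fun h => h1 (hσinj h), fun h => h2 (hσinj h),
        fun hd => h3 ((hdep a b k hab).mpr hd)⟩
    · rintro ⟨h1, h2, h3⟩
      exact ⟨fun h => h1 (congrArg σ h), fun h => h2 (congrArg σ h),
        fun hd => h3 ((hdep a b k hab).mp hd)⟩
  -- forcing the permutation to be the identity on the relevant lines
  have f4 : σ 4 = 4 := (by decide : ∀ v : Fin 12, D3 v = D3 4 → v = 4) _ (hD3 4)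
  have f9 : σ 9 = 9 := (by decide : ∀ v : Fin 12, D3 v = D3 9 → v = 9) _ (hD3 9)
  have f6 : σ 6 = 6 := (by decide : ∀ v : Fin 12, D3 v = D3 6 → v = 6) _ (hD3 6)
  have f0 : σ 0 = 0 := by
    have hc := hcnt2 0 4 (by decide)
    rw [f4] at hc
    exact (by decide : ∀ v : Fin 12, D3 v = D3 0 → cnt2 v 4 = cnt2 0 4 → v = 0) _ (hD3 0) hc
  have f2 : σ 2 = 2 := by
    have hc4 := hcnt2 2 4 (by decide); rw [f4] at hc4
    have hc9 := hcnt2 2 9 (by decide); rw [f9] at hc9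
    exact (by decide : ∀ v : Fin 12, D3 v = D3 2 → cnt2 v 4 = cnt2 2 4 →
      cnt2 v 9 = cnt2 2 9 → v = 2) _ (hD3 2) hc4 hc9
  have f5 : σ 5 = 5 := by
    have hc4 := hcnt2 5 4 (by decide); rw [f4] at hc4
    have hc9 := hcnt2 5 9 (by decide); rw [f9] at hc9
    exact (by decide : ∀ v : Fin 12, D3 v = D3 5 → cnt2 v 4 = cnt2 5 4 →
      cnt2 v 9 = cnt2 5 9 → v = 5) _ (hD3 5) hc4 hc9
  have f1 : σ 1 = 1 := by
    have hc := hcnt2 1 5 (by decide); rw [f5] at hc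
    exact (by decide : ∀ v : Fin 12, D3 v = D3 1 → cnt2 v 5 = cnt2 1 5 → v = 1) _ (hD3 1) hc
  have f8 : σ 8 = 8 := by
    have hc := hcnt2 8 5 (by decide); rw [f5] at hc
    exact (by decide : ∀ v : Fin 12, D3 v = D3 8 → cnt2 v 5 = cnt2 8 5 → v = 8) _ (hD3 8) hc
  have f3 : σ 3 = 3 := by
    have hc := hcnt2 3 8 (by decide); rw [f8] at hc
    exact (by decide : ∀ v : Fin 12, D3 v = D3 3 → cnt2 v 8 = cnt2 3 8 → v = 3) _ (hD3 3) hc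
  -- the coordinate contradiction
  have hmap : ∀ i : Fin 12, σ i = i → Submodule.map (g : Vc →ₗ[ℂ] Vc) (lineL sC i) = lineL (-sC) i := by
    intro i h
    rw [← hσ i, h]
  obtain ⟨e0p, e1p, e2p, e3p, _, _, e6p, _, _, _, _, _⟩ := lineL_vals sC
  obtain ⟨e0m, e1m, e2m, e3m, _, _, e6m, _, _, _, _, _⟩ := lineL_vals (-sC)
  have hmem : ∀ (i : Fin 12), σ i = i → ∀ v : Vc, v ∈ lineL sC i → g v ∈ lineL (-sC) i := by
    intro i h v hv
    have : (g : Vc →ₗ[ℂ] Vc) v ∈ Submodule.map (g : Vc →ₗ[ℂ] Vc) (lineL sC i) :=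
      Submodule.mem_map_of_mem hv
    rw [hmap i h] at this
    exact this
  set u0 : Vc := g ![1,0,0] with hu0
  set u1 : Vc := g ![0,1,0] with hu1
  set u2 : Vc := g ![0,0,1] with hu2
  -- memberships of basis vectors
  have m10 : u1 0 = 0 := by
    have := hmem 0 f0 ![0,1,0] (by rw [e0p, mem_lineEq]; norm_num)
    rw [e0m, mem_lineEq] at this
    simpa using this
  have m20 : u2 0 = 0 := by
    have := hmem 0 f0 ![0,0,1] (by rw [e0p, mem_lineEq]; norm_num)
    rw [e0m, mem_lineEq] at this
    simpa using this
  have m01 : u0 1 = 0 := by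
    have := hmem 1 f1 ![1,0,0] (by rw [e1p, mem_lineEq]; norm_num)
    rw [e1m, mem_lineEq] at this
    simpa using this
  have m21 : u2 1 = 0 := by
    have := hmem 1 f1 ![0,0,1] (by rw [e1p, mem_lineEq]; norm_num)
    rw [e1m, mem_lineEq] at this
    simpa using this
  have m02 : u0 2 = 0 := by
    have := hmem 2 f2 ![1,0,0] (by rw [e2p, mem_lineEq]; norm_num [Matrix.cons_val_two, Matrix.vecHead, Matrix.vecTail])
    rw [e2m, mem_lineEq] at this
    simpa using this
  have m12 : u1 2 = 0 := by
    have := hmem 2 f2 ![0,1,0] (by rw [e2p, mem_lineEq]; norm_num [Matrix.cons_val_two, Matrix.vecHead, Matrix.vecTail])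
    rw [e2m, mem_lineEq] at this
    simpa using this
  -- line 3 : X = Z
  have hsplit3 : (![1,0,1] : Vc) = ![1,0,0] + ![0,0,1] := by
    funext k; fin_cases k <;> norm_num
  have m3 : u0 0 = u2 2 := by
    have hv : (![1,0,1] : Vc) ∈ lineL sC 3 := by rw [e3p, mem_lineEq]; norm_num [Matrix.cons_val_two, Matrix.vecHead, Matrix.vecTail]
    have := hmem 3 f3 _ hv
    rw [e3m, mem_lineEq, hsplit3, map_add] at this
    simp only [Pi.add_apply] at this
    rw [← hu0, ← hu2] at this
    rw [m20, m02] at this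
    simpa using sub_eq_zero.mp (by linear_combination this)
  -- line 6 : X = sC Z  versus  X = -sC Z
  have hsplit6 : (![sC,0,1] : Vc) = sC • ![1,0,0] + ![0,0,1] := by
    funext k; fin_cases k <;> simp
  have m6 : sC * u0 0 + sC * u2 2 = 0 := by
    have hv : (![sC,0,1] : Vc) ∈ lineL sC 6 := by rw [e6p, mem_lineEq]; norm_num [Matrix.cons_val_two, Matrix.vecHead, Matrix.vecTail]
    have := hmem 6 f6 _ hv
    rw [e6m, mem_lineEq, hsplit6, map_add, map_smul] at this
    simp only [Pi.add_apply, Pi.smul_apply, smul_eq_mul] at this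
    rw [← hu0, ← hu2] at this
    rw [m20, m02] at this
    linear_combination this
  have hu00 : u0 0 = 0 := by
    rw [m3] at m6
    have h2 : sC * u2 2 = 0 := by linear_combination m6 / 2
    rcases mul_eq_zero.1 h2 with h | h
    · exact absurd h sC_ne_zero
    · rw [m3, h]
  have hu0zero : u0 = 0 := by
    funext k; fin_cases k
    · exact hu00
    · exact m01
    · exact m02
  have : (![1,0,0] : Vc) = 0 := by
    apply g.injective
    rw [map_zero]
    exact hu0zero
  have := congrFun this 0
  norm_num at this

open Classical in
/-- The two arrangements of Figure 42 (with `t₂ = ±√(1/2)`) are lattice isomorphic but not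
projectively equivalent. -/
theorem figure42_potential_zariski_pair :
    let t1 : ℂ := 1 / 2
    let s : ℂ := ((Real.sqrt (1 / 2) : ℝ) : ℂ)
    let mk : ℂ → ℂ → Finset (Submodule ℂ Vc) := fun t2 t3 =>
      ([lineEq 1 0 0, lineEq 0 1 0, lineEq 0 0 1,
        lineEq 1 0 (-1), lineEq 0 1 (-1),
        lineEq 1 0 (-t1), lineEq 1 0 (-t2), lineEq 1 0 (-t3),
        lineEq 1 (t2 - 1) (-t2), lineEq 1 (t2 - t1) (-t2),
        lineEq 1 (-t3) 0, lineEq 1 (t1 - t2) (-t1)] : List (Submodule ℂ Vc)).toFinset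
    LatticeIso 12 (mk s (1 - s)) (mk (-s) (1 + s)) ∧
      ¬ ProjEquiv (mk s (1 - s)) (mk (-s) (1 + s)) := by
  intro t1 s mk
  have e1 : mk s (1 - s) = arr sC := rfl
  have e2 : mk (-s) (1 + s) = arr (-sC) := by
    rw [show (1:ℂ) + s = 1 - -s by ring]
    exact rfl
  rw [e1, e2]
  exact ⟨part1, part2⟩
end
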